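/- One-sided diffusion on a bounded line is strictly slower than two-sided (possibly anisotropic) diffusion: let p > 0, q^L, q^R > 0, set q := q^L + q^R, let M ≥ 2 be an integer, and assume q^L ≠ j·p, q^R ≠ j·p and q ≠ j·p for every integer 1 ≤ j ≤ M−1. Then for every t > 0, Σ_{j=1}^{M} S_circle(t; p, q, j) > e^{pt} · Σ_{j=1}^{M} S_circle(t; p, q^L, j) · S_circle(t; p, q^R, M+1−j). Equivalently, the expected adoption level f_line^{1-sided}(t;p,q,M) = (1/M) Σ_{j=1}^{M} (1 − S_circle(t;p,q,j)) is strictly smaller than the two-sided adoption level f_line^{2-sided}(t;p,q^L,q^R,M) = (1/M) Σ_{j=1}^{M} (1 − e^{pt} S_circle(t;p,q^L,j) S_circle(t;p,q^R,M+1−j)). -/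

import Mathlib

/-- The coefficient `c_{M−k}` of the explicit circle formula, as a function of
`k` (so `dcoef p q k = c_{M−k}`; this is independent of `M`), defined by the
backward recursion
`c_{M−k} = 1 − q^k/∏_{j=1}^{k}(q−jp) − Σ_{j=1}^{k−1} (p^{j−k}(−q)^{k−j}/(k−j)!)·c_{M−j}`. -/
noncomputable def dcoef (p q : ℝ) : ℕ → ℝ
  | k =>
    1 - q ^ k / (∏ j ∈ Finset.Icc 1 k, (q - (j : ℝ) * p)) -
      ∑ j ∈ (Finset.Ico 1 k).attach,
        (p ^ ((j.1 : ℤ) - (k : ℤ)) * (-q) ^ (k - j.1) / (Nat.factorial (k - j.1)) *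
          dcoef p q j.1)
  decreasing_by exact (Finset.mem_Ico.mp j.2).2

/-- Nonadoption probability of a node in the discrete Bass model on a one-sided
homogeneous circle with `M` nodes, external rate `p` and internal rate `q`:
`S_circle(t;p,q,M) = Σ_{k=1}^{M−1} c_k (−q)^{k−1}/(p^{k−1}(k−1)!) e^{(−kp−q)t}
                     + (−q)^{M−1}/∏_{j=1}^{M−1}(jp−q) · e^{−Mpt}`,
where `c_k = dcoef p q (M−k)`. -/
noncomputable def Scircle (t p q : ℝ) (M : ℕ) : ℝ :=
  (∑ k ∈ Finset.Icc 1 (M - 1),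
      dcoef p q (M - k) * ((-q) ^ (k - 1) / (p ^ (k - 1) * Nat.factorial (k - 1))) *
        Real.exp ((-(k : ℝ) * p - q) * t)) +
    ((-q) ^ (M - 1) / (∏ j ∈ Finset.Icc 1 (M - 1), ((j : ℝ) * p - q))) *
      Real.exp (-(M : ℝ) * p * t)

lemma hexp (a t : ℝ) : HasDerivAt (fun t : ℝ => Real.exp (a*t)) (a * Real.exp (a*t)) t := by
  simpa [mul_comm, Function.comp_def] using (Real.hasDerivAt_exp (a*t)).comp t ((hasDerivAt_id t).const_mul a)

lemma mono_aux {f g : ℝ → ℝ} (hd : ∀ t, HasDerivAt f (g t) t)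
    (hg : ∀ t, 0 < t → 0 ≤ g t) {a b : ℝ} (ha : 0 ≤ a) (hab : a ≤ b) : f a ≤ f b := by
  have hmono : MonotoneOn f (Set.Ici 0) := by
    apply monotoneOn_of_deriv_nonneg (convex_Ici 0)
    · exact fun x _ => (hd x).differentiableAt.continuousAt.continuousWithinAt
    · intro x hx
      exact ((hd x).differentiableAt).differentiableWithinAt
    · intro x hx
      rw [interior_Ici] at hx
      rw [(hd x).deriv]
      exact hg x hx
  exact hmono ha (le_trans ha hab) hab

lemma strict_aux {f g : ℝ → ℝ} (hd : ∀ t, HasDerivAt f (g t) t)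
    (hg : ∀ t, 0 < t → 0 < g t) {a b : ℝ} (ha : 0 ≤ a) (hab : a < b) : f a < f b := by
  have hmono : StrictMonoOn f (Set.Ici 0) := by
    apply strictMonoOn_of_deriv_pos (convex_Ici 0)
    · intro x hx
      exact (hd x).differentiableAt.continuousAt.continuousWithinAt
    · intro x hx
      rw [interior_Ici] at hx
      rw [(hd x).deriv]
      exact hg x hx
  exact hmono ha (le_trans ha hab.le) hab

lemma key_nonneg {f g : ℝ → ℝ} {c : ℝ} (h0 : f 0 = 0)
    (hd : ∀ t, HasDerivAt f (g t) t)
    (h : ∀ t, 0 < t → 0 ≤ g t + c * f t) : ∀ t, 0 ≤ t → 0 ≤ f t := by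
  intro t ht
  have hφ : ∀ s : ℝ, HasDerivAt (fun u => Real.exp (c*u) * f u)
      (Real.exp (c*s) * (g s + c * f s)) s := by
    intro s
    have h1 : HasDerivAt (fun u => Real.exp (c*u) * f u) _ s := (hexp c s).fun_mul (hd s)
    convert h1 using 1
    ring
  have h2 : Real.exp (c*0) * f 0 ≤ Real.exp (c*t) * f t :=
    mono_aux hφ (fun s hs => mul_nonneg (Real.exp_nonneg _) (h s hs)) le_rfl ht
  rw [h0, mul_zero] at h2
  nlinarith [Real.exp_pos (c*t)]

lemma key_pos {f g : ℝ → ℝ} {c : ℝ} (h0 : f 0 = 0)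
    (hd : ∀ t, HasDerivAt f (g t) t)
    (h : ∀ t, 0 < t → 0 < g t + c * f t) : ∀ t, 0 < t → 0 < f t := by
  intro t ht
  have hφ : ∀ s : ℝ, HasDerivAt (fun u => Real.exp (c*u) * f u)
      (Real.exp (c*s) * (g s + c * f s)) s := by
    intro s
    have h1 : HasDerivAt (fun u => Real.exp (c*u) * f u) _ s := (hexp c s).fun_mul (hd s)
    convert h1 using 1
    ring
  have h2 : Real.exp (c*0) * f 0 < Real.exp (c*t) * f t :=
    strict_aux hφ (fun s hs => mul_pos (Real.exp_pos _) (h s hs)) le_rfl ht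
  rw [h0, mul_zero] at h2
  nlinarith [Real.exp_pos (c*t)]

lemma dcoef_def (p q : ℝ) (k : ℕ) : dcoef p q k =
    1 - q ^ k / (∏ j ∈ Finset.Icc 1 k, (q - (j : ℝ) * p)) -
      ∑ j ∈ Finset.Ico 1 k,
        (p ^ ((j : ℤ) - (k : ℤ)) * (-q) ^ (k - j) / (Nat.factorial (k - j)) *
          dcoef p q j) := by
  rw [dcoef]
  rw [← Finset.sum_attach (Finset.Ico 1 k) (fun j => p ^ ((j : ℤ) - (k : ℤ)) * (-q) ^ (k - j) / (Nat.factorial (k - j)) * dcoef p q j)]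

lemma prod_q_sub (p q : ℝ) (n : ℕ) :
    q ^ n / (∏ j ∈ Finset.Icc 1 n, (q - (j : ℝ) * p)) =
      (-q) ^ n / (∏ j ∈ Finset.Icc 1 n, ((j : ℝ) * p - q)) := by
  have h1 : (∏ j ∈ Finset.Icc 1 n, (q - (j : ℝ) * p)) =
      (-1 : ℝ) ^ n * ∏ j ∈ Finset.Icc 1 n, ((j : ℝ) * p - q) := by
    have : ∀ j : ℕ, (q - (j : ℝ) * p) = (-1) * ((j : ℝ) * p - q) := by intro j; ring
    rw [Finset.prod_congr rfl (fun j _ => this j), Finset.prod_mul_distrib,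
      Finset.prod_const, Nat.card_Icc]
    norm_num
  have h2 : ((-1:ℝ)^n)⁻¹ = (-1)^n := by rw [← inv_pow]; norm_num
  rw [h1, div_mul_eq_div_div, div_eq_mul_inv (q^n), h2, mul_comm, ← neg_pow]

lemma insert_Icc (m : ℕ) (hm : 2 ≤ m) :
    Finset.Icc 1 (m-1) = insert 1 (Finset.Icc 2 (m-1)) := by
  ext x; simp only [Finset.mem_Icc, Finset.mem_insert]; omega

lemma Scircle_zero (p q : ℝ) (m : ℕ) (hm : 1 ≤ m) : Scircle 0 p q m = 1 := by
  rcases eq_or_lt_of_le hm with h1 | hm2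
  · simp [Scircle, ← h1]
  · have hm2 : 2 ≤ m := hm2
    have h10 : (1:ℕ) ∉ Finset.Icc 2 (m-1) := by simp
    rw [Scircle]
    simp only [mul_zero, Real.exp_zero, mul_one]
    have hsplit : ∑ k ∈ Finset.Icc 1 (m - 1),
        dcoef p q (m - k) * ((-q) ^ (k - 1) / (p ^ (k - 1) * (Nat.factorial (k - 1) : ℝ))) =
        dcoef p q (m-1) + ∑ k ∈ Finset.Icc 2 (m-1),
          dcoef p q (m - k) * ((-q) ^ (k - 1) / (p ^ (k - 1) * (Nat.factorial (k - 1) : ℝ))) := by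
      rw [insert_Icc m hm2, Finset.sum_insert h10]
      norm_num
    rw [hsplit]
    have hsum : ∑ k ∈ Finset.Icc 2 (m-1),
        dcoef p q (m - k) * ((-q) ^ (k - 1) / (p ^ (k - 1) * (Nat.factorial (k - 1) : ℝ))) =
        ∑ j ∈ Finset.Ico 1 (m-1),
          (p ^ ((j : ℤ) - ((m-1 : ℕ) : ℤ)) * (-q) ^ ((m-1) - j) / (Nat.factorial ((m-1) - j) : ℝ) *
            dcoef p q j) := by
      apply Finset.sum_nbij' (fun k => m - k) (fun j => m - j)
      · intro k hk; simp only [Finset.mem_Icc] at hk; simp only [Finset.mem_Ico]; omega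
      · intro j hj; simp only [Finset.mem_Ico] at hj; simp only [Finset.mem_Icc]; omega
      · intro k hk; simp only [Finset.mem_Icc] at hk; omega
      · intro j hj; simp only [Finset.mem_Ico] at hj; omega
      · intro k hk
        simp only [Finset.mem_Icc] at hk
        have e1 : (m - 1) - (m - k) = k - 1 := by omega
        have e2 : ((m - k : ℕ) : ℤ) - ((m - 1 : ℕ) : ℤ) = -((k - 1 : ℕ) : ℤ) := by
          push_cast [Nat.cast_sub (by omega : k ≤ m), Nat.cast_sub (by omega : 1 ≤ m),
            Nat.cast_sub (by omega : 1 ≤ k)]; ring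
        rw [e1, e2, zpow_neg, zpow_natCast]
        rw [div_eq_mul_inv, div_eq_mul_inv, mul_inv]
        ring
    rw [hsum, dcoef_def p q (m-1), prod_q_sub]
    ring

lemma Scircle_hasDerivAt (p q : ℝ) (m : ℕ) (t : ℝ) :
    HasDerivAt (fun t => Scircle t p q m)
      ((∑ k ∈ Finset.Icc 1 (m-1),
        dcoef p q (m-k) * ((-q)^(k-1)/(p^(k-1)*(Nat.factorial (k-1) : ℝ))) *
          ((-(k:ℝ)*p - q) * Real.exp ((-(k:ℝ)*p - q)*t))) +
       ((-q)^(m-1)/(∏ j ∈ Finset.Icc 1 (m-1), ((j:ℝ)*p - q))) *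
         ((-(m:ℝ)*p) * Real.exp (-(m:ℝ)*p*t))) t := by
  have hexp : ∀ a : ℝ, HasDerivAt (fun t : ℝ => Real.exp (a*t)) (a * Real.exp (a*t)) t := by
    intro a
    simpa [mul_comm, Function.comp_def] using (Real.hasDerivAt_exp (a*t)).comp t ((hasDerivAt_id t).const_mul a)
  unfold Scircle
  exact (HasDerivAt.fun_sum fun k _ => ((hexp _).const_mul _)).fun_add ((hexp _).const_mul _)

lemma insert_Icc' (n : ℕ) :
    Finset.Icc 1 (n+1) = insert 1 (Finset.Icc 2 (n+1)) := by
  ext x; simp only [Finset.mem_Icc, Finset.mem_insert]; omega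

lemma Scircle_ode (p q : ℝ) (hp : p ≠ 0) (n : ℕ)
    (hq : q ≠ ((n:ℝ) + 1) * p) (t : ℝ) :
    HasDerivAt (fun t => Scircle t p q (n+2))
      (-(p+q) * Scircle t p q (n+2) + q * Real.exp (-p*t) * Scircle t p q (n+1)) t := by
  have h := Scircle_hasDerivAt p q (n+2) t
  convert h using 1
  unfold Scircle
  simp only [Nat.add_sub_cancel, show n + 2 - 1 = n + 1 from rfl]
  set ept := Real.exp (-p*t) with hept
  have hE : Real.exp (-p*t) * Real.exp (-((n+1:ℕ):ℝ)*p*t) = Real.exp (-((n+2:ℕ):ℝ)*p*t) := by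
    rw [← Real.exp_add]; congr 1; push_cast; ring
  have he : ∀ k:ℕ, Real.exp (-p*t) * Real.exp ((-(k:ℝ)*p - q)*t)
      = Real.exp ((-((k+1:ℕ):ℝ)*p - q)*t) := by
    intro k; rw [← Real.exp_add]; congr 1; push_cast; ring
  -- step 1+2 : reindex the q * e^{-pt} * (sum part of S_{n+1})
  have hstep12 : q * ept * (∑ k ∈ Finset.Icc 1 n,
      dcoef p q (n+1-k) * ((-q)^(k-1)/(p^(k-1)*(Nat.factorial (k-1) : ℝ))) *
        Real.exp ((-(k:ℝ)*p - q)*t)) =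
      ∑ k ∈ Finset.Icc 2 (n+1),
        q * (dcoef p q (n+2-k) * ((-q)^(k-2)/(p^(k-2)*(Nat.factorial (k-2) : ℝ)))) *
          Real.exp ((-(k:ℝ)*p - q)*t) := by
    rw [Finset.mul_sum]
    apply Finset.sum_nbij' (fun k => k + 1) (fun k => k - 1)
    · intro k hk; simp only [Finset.mem_Icc] at hk ⊢; omega
    · intro k hk; simp only [Finset.mem_Icc] at hk ⊢; omega
    · intro k hk; simp
    · intro k hk; simp only [Finset.mem_Icc] at hk; omega
    · intro k hk
      simp only [Finset.mem_Icc] at hk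
      have e1 : n + 2 - (k+1) = n + 1 - k := by omega
      have e2 : k + 1 - 2 = k - 1 := by omega
      rw [e1, e2, ← he k, hept]
      ring
  have hstepE : q * ept * (((-q)^n/(∏ j ∈ Finset.Icc 1 n, ((j:ℝ)*p - q))) *
      Real.exp (-((n+1:ℕ):ℝ)*p*t)) =
      q * ((-q)^n/(∏ j ∈ Finset.Icc 1 n, ((j:ℝ)*p - q))) * Real.exp (-((n+2:ℕ):ℝ)*p*t) := by
    rw [hept, ← hE]; ring
  rw [mul_add (q * ept), hstep12, hstepE]
  have hC : ((-q)^(n+1)/(∏ j ∈ Finset.Icc 1 (n+1), ((j:ℝ)*p - q))) *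
      ((-((n+2:ℕ):ℝ)*p) * Real.exp (-((n+2:ℕ):ℝ)*p*t))
      = -(p+q) * (((-q)^(n+1)/(∏ j ∈ Finset.Icc 1 (n+1), ((j:ℝ)*p - q))) *
          Real.exp (-((n+2:ℕ):ℝ)*p*t))
        + q * ((-q)^n/(∏ j ∈ Finset.Icc 1 n, ((j:ℝ)*p - q))) *
          Real.exp (-((n+2:ℕ):ℝ)*p*t) := by
    rw [Finset.prod_Icc_succ_top (by omega : 1 ≤ n+1)]
    rcases eq_or_ne (∏ j ∈ Finset.Icc 1 n, ((j:ℝ)*p - q)) 0 with h0 | h0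
    · simp [h0]
    · have hne : ((n+1:ℕ):ℝ)*p - q ≠ 0 := by
        push_cast
        intro hc
        exact hq (by linarith)
      push_cast at hne ⊢
      rw [pow_succ]
      generalize (∏ j ∈ Finset.Icc 1 n, ((j:ℝ)*p - q)) = P at h0 ⊢
      field_simp
      ring
  rw [hC]
  rw [insert_Icc' n]
  have h10 : (1:ℕ) ∉ Finset.Icc 2 (n+1) := by simp
  rw [Finset.sum_insert h10, Finset.sum_insert h10]
  -- k = 1 term
  have hk1 : dcoef p q (n+2-1) * ((-q)^(1-1)/(p^(1-1)*(Nat.factorial (1-1) : ℝ))) *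
      ((-((1:ℕ):ℝ)*p - q) * Real.exp ((-((1:ℕ):ℝ)*p - q)*t)) =
      -(p+q) * (dcoef p q (n+2-1) * ((-q)^(1-1)/(p^(1-1)*(Nat.factorial (1-1) : ℝ))) *
        Real.exp ((-((1:ℕ):ℝ)*p - q)*t)) := by
    norm_num; ring
  rw [hk1]
  -- per-term identity for k ∈ [2, n+1]
  have hterm : ∀ k ∈ Finset.Icc 2 (n+1),
      dcoef p q (n+2-k) * ((-q)^(k-1)/(p^(k-1)*(Nat.factorial (k-1) : ℝ))) *
        ((-(k:ℝ)*p - q) * Real.exp ((-(k:ℝ)*p - q)*t)) =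
      -(p+q) * (dcoef p q (n+2-k) * ((-q)^(k-1)/(p^(k-1)*(Nat.factorial (k-1) : ℝ))) *
        Real.exp ((-(k:ℝ)*p - q)*t)) +
      q * (dcoef p q (n+2-k) * ((-q)^(k-2)/(p^(k-2)*(Nat.factorial (k-2) : ℝ)))) *
        Real.exp ((-(k:ℝ)*p - q)*t) := by
    intro k hk
    simp only [Finset.mem_Icc] at hk
    obtain ⟨i, rfl⟩ : ∃ i, k = i + 2 := ⟨k - 2, by omega⟩
    have e1 : i + 2 - 1 = i + 1 := rfl
    have e2 : i + 2 - 2 = i := rfl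
    rw [e1, e2]
    have hc : ((i+2:ℕ):ℝ) = (i:ℝ)+2 := by push_cast; ring
    rw [hc]
    have hfac : (Nat.factorial (i+1) : ℝ) = ((i:ℝ)+1) * (Nat.factorial i : ℝ) := by
      push_cast [Nat.factorial_succ]; ring
    have hf0 : (Nat.factorial i : ℝ) ≠ 0 := Nat.cast_ne_zero.mpr (Nat.factorial_ne_zero i)
    have hi1 : ((i:ℝ)+1) ≠ 0 := by positivity
    rw [hfac, pow_succ, pow_succ]
    field_simp
    ring
  rw [Finset.sum_congr rfl hterm, Finset.sum_add_distrib, ← Finset.mul_sum]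
  ring


noncomputable def Sder (p q : ℝ) (m : ℕ) (t : ℝ) : ℝ :=
  if m = 1 then -p * Real.exp (-p*t)
  else -(p+q) * Scircle t p q m + q * Real.exp (-p*t) * Scircle t p q (m-1)

lemma Scircle_one (t p q : ℝ) : Scircle t p q 1 = Real.exp (-p * t) := by
  simp [Scircle]

lemma hasDerivAt_Scircle (p q : ℝ) (hp : p ≠ 0) (m : ℕ) (hm : 1 ≤ m)
    (hq : 2 ≤ m → q ≠ ((m:ℝ)-1)*p) (t : ℝ) :
    HasDerivAt (fun t => Scircle t p q m) (Sder p q m t) t := by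
  rcases eq_or_lt_of_le hm with h1 | h2
  · have : m = 1 := h1.symm
    subst this
    simp only [Sder, if_pos rfl]
    have : (fun t => Scircle t p q 1) = fun t => Real.exp (-p*t) := by
      funext s; rw [Scircle_one]
    rw [this]
    simpa [mul_comm] using hexp (-p) t
  · obtain ⟨n, rfl⟩ : ∃ n, m = n + 2 := ⟨m - 2, by omega⟩
    have hne : (n + 2 : ℕ) ≠ 1 := by omega
    simp only [Sder, if_neg hne]
    have hq' : q ≠ ((n:ℝ) + 1) * p := by
      intro hc
      apply hq (by omega)
      push_cast
      rw [hc]; ring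
    have := Scircle_ode p q hp n hq' t
    simpa using this

lemma cast_sub_one (m : ℕ) (hm : 1 ≤ m) : ((m - 1 : ℕ) : ℝ) = (m : ℝ) - 1 := by
  push_cast [Nat.cast_sub hm]
  ring

lemma S_le_pred (p q : ℝ) (hp : 0 < p) (hq : 0 < q) (M : ℕ)
    (hnd : ∀ j : ℕ, 1 ≤ j → j ≤ M - 1 → q ≠ (j:ℝ) * p) :
    ∀ m, 2 ≤ m → m ≤ M → ∀ t, 0 ≤ t → Scircle t p q m ≤ Scircle t p q (m-1) := by
  intro m hm2
  induction m, hm2 using Nat.le_induction with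
  | base =>
    intro hM t ht
    have hq2 : (2:ℕ) ≤ 2 → q ≠ (((2:ℕ):ℝ) - 1)*p := by
      intro _
      have := hnd 1 le_rfl (by omega)
      push_cast
      norm_num
      exact fun hc => this (by rw [hc]; norm_num)
    have hd : ∀ s, HasDerivAt (fun u => Scircle u p q 1 - Scircle u p q 2)
        (Sder p q 1 s - Sder p q 2 s) s := fun s =>
      (hasDerivAt_Scircle p q hp.ne' 1 le_rfl (by omega) s).sub
        (hasDerivAt_Scircle p q hp.ne' 2 (by omega) hq2 s)
    have h := key_nonneg (c := p+q) (f := fun u => Scircle u p q 1 - Scircle u p q 2)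
      (g := fun s => Sder p q 1 s - Sder p q 2 s)
      (by show Scircle 0 p q 1 - Scircle 0 p q 2 = 0
          rw [Scircle_zero p q 1 le_rfl, Scircle_zero p q 2 (by omega)]; ring) hd ?_
    · have := h t ht
      have h21 : (2:ℕ) - 1 = 1 := rfl
      rw [h21]
      linarith
    · intro s hs
      have e1 : Sder p q 1 s = -p * Real.exp (-p*s) := by simp [Sder]
      have e2 : Sder p q 2 s = -(p+q) * Scircle s p q 2 + q * Real.exp (-p*s) * Scircle s p q 1 := by
        norm_num [Sder]
      simp only [e1, e2, Scircle_one]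
      have he : 0 < Real.exp (-p*s) := Real.exp_pos _
      have hle : Real.exp (-p*s) ≤ 1 := by
        rw [show (1:ℝ) = Real.exp 0 by simp]
        apply Real.exp_le_exp.mpr
        nlinarith
      nlinarith [mul_nonneg (mul_nonneg hq.le he.le) (sub_nonneg.mpr hle)]
  | succ m hm ih =>
    intro hM t ht
    have hqm : 2 ≤ m → q ≠ (((m:ℕ):ℝ) - 1)*p := by
      intro hm2'
      have := hnd (m-1) (by omega) (by omega)
      rw [cast_sub_one m (by omega)] at this
      exact this
    have hqm1 : 2 ≤ m+1 → q ≠ (((m+1:ℕ):ℝ) - 1)*p := by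
      intro _
      have := hnd m (by omega) (by omega)
      push_cast
      simpa using this
    have hd : ∀ s, HasDerivAt (fun u => Scircle u p q m - Scircle u p q (m+1))
        (Sder p q m s - Sder p q (m+1) s) s := fun s =>
      (hasDerivAt_Scircle p q hp.ne' m (by omega) hqm s).sub
        (hasDerivAt_Scircle p q hp.ne' (m+1) (by omega) hqm1 s)
    have h := key_nonneg (c := p+q) (f := fun u => Scircle u p q m - Scircle u p q (m+1))
      (g := fun s => Sder p q m s - Sder p q (m+1) s)
      (by show Scircle 0 p q m - Scircle 0 p q (m+1) = 0
          rw [Scircle_zero p q m (by omega), Scircle_zero p q (m+1) (by omega)]; ring) hd ?_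
    · have := h t ht
      have h21 : (m+1:ℕ) - 1 = m := rfl
      rw [h21]
      linarith
    · intro s hs
      have e1 : Sder p q m s = -(p+q) * Scircle s p q m + q * Real.exp (-p*s) * Scircle s p q (m-1) := by
        simp [Sder, show m ≠ 1 by omega]
      have e2 : Sder p q (m+1) s = -(p+q) * Scircle s p q (m+1) + q * Real.exp (-p*s) * Scircle s p q m := by
        simp [Sder, show m+1 ≠ 1 by omega, show m ≠ 0 by omega]
      simp only [e1, e2]
      have he : 0 < Real.exp (-p*s) := Real.exp_pos _
      have hmono := ih (by omega) s hs.le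
      nlinarith [mul_nonneg (mul_nonneg hq.le he.le) (sub_nonneg.mpr hmono)]

lemma S_le_two (p q : ℝ) (hp : 0 < p) (hq : 0 < q) (M : ℕ)
    (hnd : ∀ j : ℕ, 1 ≤ j → j ≤ M - 1 → q ≠ (j:ℝ) * p) :
    ∀ m, 2 ≤ m → m ≤ M → ∀ t, 0 ≤ t → Scircle t p q m ≤ Scircle t p q 2 := by
  intro m hm2
  induction m, hm2 using Nat.le_induction with
  | base => intro _ t _; exact le_rfl
  | succ m hm ih =>
    intro hM t ht
    have h1 := S_le_pred p q hp hq M hnd (m+1) (by omega) hM t ht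
    have h21 : (m+1:ℕ) - 1 = m := rfl
    rw [h21] at h1
    exact le_trans h1 (ih (by omega) t ht)

lemma S_lt_exp (p q : ℝ) (hp : 0 < p) (hq : 0 < q) (M : ℕ)
    (hnd : ∀ j : ℕ, 1 ≤ j → j ≤ M - 1 → q ≠ (j:ℝ) * p) :
    ∀ m, 2 ≤ m → m ≤ M → ∀ t, 0 < t → Scircle t p q m < Real.exp (-p*t) := by
  intro m hm2 hM t ht
  have hM2 : 2 ≤ M := le_trans hm2 hM
  have hS2 : ∀ t, 0 < t → Scircle t p q 2 < Real.exp (-p*t) := by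
    have hq2 : (2:ℕ) ≤ 2 → q ≠ (((2:ℕ):ℝ) - 1)*p := by
      intro _
      have := hnd 1 le_rfl (by omega)
      push_cast
      norm_num
      exact fun hc => this (by rw [hc]; norm_num)
    have hd : ∀ s, HasDerivAt (fun u => Scircle u p q 1 - Scircle u p q 2)
        (Sder p q 1 s - Sder p q 2 s) s := fun s =>
      (hasDerivAt_Scircle p q hp.ne' 1 le_rfl (by omega) s).sub
        (hasDerivAt_Scircle p q hp.ne' 2 (by omega) hq2 s)
    have h := key_pos (c := p+q) (f := fun u => Scircle u p q 1 - Scircle u p q 2)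
      (g := fun s => Sder p q 1 s - Sder p q 2 s)
      (by show Scircle 0 p q 1 - Scircle 0 p q 2 = 0
          rw [Scircle_zero p q 1 le_rfl, Scircle_zero p q 2 (by omega)]; ring) hd ?_
    · intro s hs
      have := h s hs
      rw [← Scircle_one s p q]
      linarith
    · intro s hs
      have e1 : Sder p q 1 s = -p * Real.exp (-p*s) := by simp [Sder]
      have e2 : Sder p q 2 s = -(p+q) * Scircle s p q 2 + q * Real.exp (-p*s) * Scircle s p q 1 := by
        norm_num [Sder]
      simp only [e1, e2, Scircle_one]
      have he : 0 < Real.exp (-p*s) := Real.exp_pos _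
      have hlt : Real.exp (-p*s) < 1 := by
        rw [show (1:ℝ) = Real.exp 0 by simp]
        apply Real.exp_lt_exp.mpr
        nlinarith
      nlinarith [mul_pos (mul_pos hq he) (sub_pos.mpr hlt)]
  exact lt_of_le_of_lt (S_le_two p q hp hq M hnd m hm2 hM t ht.le) (hS2 t ht)

noncomputable def Asum (p q : ℝ) (m : ℕ) (t : ℝ) : ℝ := ∑ j ∈ Finset.Icc 1 m, Scircle t p q j

noncomputable def Bsum (p qL qR : ℝ) (m : ℕ) (t : ℝ) : ℝ :=
  Real.exp (p*t) * ∑ j ∈ Finset.Icc 1 m, Scircle t p qL j * Scircle t p qR (m+1-j)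

lemma insert_Icc1 (m : ℕ) (hm : 1 ≤ m) :
    Finset.Icc 1 m = insert 1 (Finset.Icc 2 m) := by
  ext x; simp only [Finset.mem_Icc, Finset.mem_insert]; omega

lemma Asum_hasDeriv (p q : ℝ) (hp : 0 < p) (M : ℕ)
    (hnd : ∀ j : ℕ, 1 ≤ j → j ≤ M - 1 → q ≠ (j:ℝ) * p)
    (m : ℕ) (hm : 2 ≤ m) (hM : m ≤ M) (t : ℝ) :
    HasDerivAt (fun t => Asum p q m t)
      (-(p+q) * Asum p q m t + q * Real.exp (-p*t) * (1 + Asum p q (m-1) t)) t := by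
  have hders : HasDerivAt (fun t => Asum p q m t) (∑ j ∈ Finset.Icc 1 m, Sder p q j t) t := by
    unfold Asum
    apply HasDerivAt.fun_sum
    intro j hj
    simp only [Finset.mem_Icc] at hj
    apply hasDerivAt_Scircle p q hp.ne' j hj.1
    intro hj2
    have := hnd (j-1) (by omega) (by omega)
    rw [cast_sub_one j (by omega)] at this
    exact this
  convert hders using 1
  rw [insert_Icc1 m (by omega), Finset.sum_insert (by simp)]
  have h1 : Sder p q 1 t = -p * Real.exp (-p*t) := by simp [Sder]
  have hterm : ∀ j ∈ Finset.Icc 2 m, Sder p q j t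
      = -(p+q) * Scircle t p q j + q * Real.exp (-p*t) * Scircle t p q (j-1) := by
    intro j hj
    simp only [Finset.mem_Icc] at hj
    simp [Sder, show ¬ j = 1 by omega]
  rw [h1, Finset.sum_congr rfl hterm, Finset.sum_add_distrib, ← Finset.mul_sum, ← Finset.mul_sum]
  have hre : ∑ j ∈ Finset.Icc 2 m, Scircle t p q (j-1)
      = ∑ i ∈ Finset.Icc 1 (m-1), Scircle t p q i := by
    apply Finset.sum_nbij' (fun j => j - 1) (fun i => i + 1)
    · intro j hj; simp only [Finset.mem_Icc] at hj ⊢; omega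
    · intro i hi; simp only [Finset.mem_Icc] at hi ⊢; omega
    · intro j hj; simp only [Finset.mem_Icc] at hj; omega
    · intro i hi; simp only [Finset.mem_Icc] at hi; omega
    · intro j hj; rfl
  rw [hre]
  have hA : Asum p q m t = Real.exp (-p*t) + ∑ j ∈ Finset.Icc 2 m, Scircle t p q j := by
    unfold Asum
    rw [insert_Icc1 m (by omega), Finset.sum_insert (by simp), Scircle_one]
  rw [hA]
  unfold Asum
  ring

lemma Bsum_hasDeriv (p qL qR : ℝ) (hp : 0 < p) (M : ℕ)
    (hndL : ∀ j : ℕ, 1 ≤ j → j ≤ M - 1 → qL ≠ (j:ℝ) * p)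
    (hndR : ∀ j : ℕ, 1 ≤ j → j ≤ M - 1 → qR ≠ (j:ℝ) * p)
    (m : ℕ) (hm : 2 ≤ m) (hM : m ≤ M) (t : ℝ) :
    HasDerivAt (fun t => Bsum p qL qR m t)
      (-(p+(qL+qR)) * Bsum p qL qR m t + (qL+qR) * Real.exp (-p*t) * Bsum p qL qR (m-1) t
        + qL * Scircle t p qR m + qR * Scircle t p qL m) t := by
  have dL : ∀ j ∈ Finset.Icc 1 m, HasDerivAt (fun t => Scircle t p qL j) (Sder p qL j t) t := by
    intro j hj; simp only [Finset.mem_Icc] at hj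
    apply hasDerivAt_Scircle p qL hp.ne' j hj.1
    intro h2
    have := hndL (j-1) (by omega) (by omega)
    rw [cast_sub_one j (by omega)] at this; exact this
  have dR : ∀ j ∈ Finset.Icc 1 m, HasDerivAt (fun t => Scircle t p qR (m+1-j)) (Sder p qR (m+1-j) t) t := by
    intro j hj; simp only [Finset.mem_Icc] at hj
    apply hasDerivAt_Scircle p qR hp.ne' (m+1-j) (by omega)
    intro h2
    have := hndR (m+1-j-1) (by omega) (by omega)
    rw [cast_sub_one (m+1-j) (by omega)] at this; exact this
  have hraw : HasDerivAt (fun t => Bsum p qL qR m t)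
      (p * Real.exp (p*t) * (∑ j ∈ Finset.Icc 1 m, Scircle t p qL j * Scircle t p qR (m+1-j))
        + Real.exp (p*t) * (∑ j ∈ Finset.Icc 1 m,
            (Sder p qL j t * Scircle t p qR (m+1-j) + Scircle t p qL j * Sder p qR (m+1-j) t))) t := by
    unfold Bsum
    exact (hexp p t).fun_mul (HasDerivAt.fun_sum (fun j hj => HasDerivAt.fun_mul (dL j hj) (dR j hj)))
  convert hraw using 1
  rw [Finset.sum_add_distrib]
  have hT1 : ∑ j ∈ Finset.Icc 1 m, Sder p qL j t * Scircle t p qR (m+1-j)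
      = -p * Real.exp (-p*t) * Scircle t p qR m
        + (-(p+qL)) * (∑ j ∈ Finset.Icc 2 m, Scircle t p qL j * Scircle t p qR (m+1-j))
        + qL * Real.exp (-p*t) * (∑ i ∈ Finset.Icc 1 (m-1), Scircle t p qL i * Scircle t p qR (m-i)) := by
    rw [insert_Icc1 m (by omega), Finset.sum_insert (by simp)]
    have h1 : Sder p qL 1 t * Scircle t p qR (m+1-1) = -p * Real.exp (-p*t) * Scircle t p qR m := by
      rw [show m+1-1 = m from rfl]
      simp [Sder]
    have hterm : ∀ j ∈ Finset.Icc 2 m, Sder p qL j t * Scircle t p qR (m+1-j)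
        = (-(p+qL)) * (Scircle t p qL j * Scircle t p qR (m+1-j))
          + qL * Real.exp (-p*t) * (Scircle t p qL (j-1) * Scircle t p qR (m+1-j)) := by
      intro j hj; simp only [Finset.mem_Icc] at hj
      simp only [Sder, if_neg (show ¬ j = 1 by omega)]
      ring
    rw [h1, Finset.sum_congr rfl hterm, Finset.sum_add_distrib, ← Finset.mul_sum, ← Finset.mul_sum]
    have hre : ∑ j ∈ Finset.Icc 2 m, Scircle t p qL (j-1) * Scircle t p qR (m+1-j)
        = ∑ i ∈ Finset.Icc 1 (m-1), Scircle t p qL i * Scircle t p qR (m-i) := by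
      apply Finset.sum_nbij' (fun j => j - 1) (fun i => i + 1)
      · intro j hj; simp only [Finset.mem_Icc] at hj ⊢; omega
      · intro i hi; simp only [Finset.mem_Icc] at hi ⊢; omega
      · intro j hj; simp only [Finset.mem_Icc] at hj; omega
      · intro i hi; simp only [Finset.mem_Icc] at hi; omega
      · intro j hj; simp only [Finset.mem_Icc] at hj
        rw [show m+1-j = m-(j-1) by omega]
    rw [hre]
    ring
  have hswap : ∑ j ∈ Finset.Icc 1 m, Scircle t p qL j * Sder p qR (m+1-j) t
      = ∑ i ∈ Finset.Icc 1 m, Scircle t p qL (m+1-i) * Sder p qR i t := by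
    apply Finset.sum_nbij' (fun j => m+1-j) (fun i => m+1-i)
    · intro j hj; simp only [Finset.mem_Icc] at hj ⊢; omega
    · intro i hi; simp only [Finset.mem_Icc] at hi ⊢; omega
    · intro j hj; simp only [Finset.mem_Icc] at hj; omega
    · intro i hi; simp only [Finset.mem_Icc] at hi; omega
    · intro j hj; simp only [Finset.mem_Icc] at hj
      rw [show m+1-(m+1-j) = j by omega]
  have hT2 : ∑ i ∈ Finset.Icc 1 m, Scircle t p qL (m+1-i) * Sder p qR i t
      = Scircle t p qL m * (-p * Real.exp (-p*t))
        + (-(p+qR)) * (∑ i ∈ Finset.Icc 2 m, Scircle t p qL (m+1-i) * Scircle t p qR i)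
        + qR * Real.exp (-p*t) * (∑ i ∈ Finset.Icc 1 (m-1), Scircle t p qL i * Scircle t p qR (m-i)) := by
    rw [insert_Icc1 m (by omega), Finset.sum_insert (by simp)]
    have h1 : Scircle t p qL (m+1-1) * Sder p qR 1 t = Scircle t p qL m * (-p * Real.exp (-p*t)) := by
      rw [show m+1-1 = m from rfl]
      simp [Sder]
    have hterm : ∀ i ∈ Finset.Icc 2 m, Scircle t p qL (m+1-i) * Sder p qR i t
        = (-(p+qR)) * (Scircle t p qL (m+1-i) * Scircle t p qR i)
          + qR * Real.exp (-p*t) * (Scircle t p qL (m+1-i) * Scircle t p qR (i-1)) := by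
      intro i hi; simp only [Finset.mem_Icc] at hi
      simp only [Sder, if_neg (show ¬ i = 1 by omega)]
      ring
    rw [h1, Finset.sum_congr rfl hterm, Finset.sum_add_distrib, ← Finset.mul_sum, ← Finset.mul_sum]
    have hre1 : ∑ i ∈ Finset.Icc 2 m, Scircle t p qL (m+1-i) * Scircle t p qR (i-1)
        = ∑ k ∈ Finset.Icc 1 (m-1), Scircle t p qL (m-k) * Scircle t p qR k := by
      apply Finset.sum_nbij' (fun i => i - 1) (fun k => k + 1)
      · intro j hj; simp only [Finset.mem_Icc] at hj ⊢; omega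
      · intro i hi; simp only [Finset.mem_Icc] at hi ⊢; omega
      · intro j hj; simp only [Finset.mem_Icc] at hj; omega
      · intro i hi; simp only [Finset.mem_Icc] at hi; omega
      · intro i hi; simp only [Finset.mem_Icc] at hi
        rw [show m+1-i = m-(i-1) by omega]
    have hre2 : ∑ k ∈ Finset.Icc 1 (m-1), Scircle t p qL (m-k) * Scircle t p qR k
        = ∑ i ∈ Finset.Icc 1 (m-1), Scircle t p qL i * Scircle t p qR (m-i) := by
      apply Finset.sum_nbij' (fun k => m - k) (fun k => m - k)
      · intro j hj; simp only [Finset.mem_Icc] at hj ⊢; omega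
      · intro i hi; simp only [Finset.mem_Icc] at hi ⊢; omega
      · intro j hj; simp only [Finset.mem_Icc] at hj; omega
      · intro i hi; simp only [Finset.mem_Icc] at hi; omega
      · intro k hk; simp only [Finset.mem_Icc] at hk
        rw [show m-(m-k) = k by omega]
    rw [hre1, hre2]
    ring
  rw [hT1, hswap, hT2]
  have hWsplit : ∑ j ∈ Finset.Icc 2 m, Scircle t p qL j * Scircle t p qR (m+1-j)
      = (∑ j ∈ Finset.Icc 1 m, Scircle t p qL j * Scircle t p qR (m+1-j))
        - Real.exp (-p*t) * Scircle t p qR m := by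
    rw [insert_Icc1 m (by omega), Finset.sum_insert (by simp), show m+1-1 = m from rfl, Scircle_one]
    ring
  have hWswap : ∑ j ∈ Finset.Icc 1 m, Scircle t p qL j * Scircle t p qR (m+1-j)
      = ∑ i ∈ Finset.Icc 1 m, Scircle t p qL (m+1-i) * Scircle t p qR i := by
    apply Finset.sum_nbij' (fun j => m+1-j) (fun i => m+1-i)
    · intro j hj; simp only [Finset.mem_Icc] at hj ⊢; omega
    · intro i hi; simp only [Finset.mem_Icc] at hi ⊢; omega
    · intro j hj; simp only [Finset.mem_Icc] at hj; omega
    · intro i hi; simp only [Finset.mem_Icc] at hi; omega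
    · intro j hj; simp only [Finset.mem_Icc] at hj
      rw [show m+1-(m+1-j) = j by omega]
  have hWsplit2 : ∑ i ∈ Finset.Icc 2 m, Scircle t p qL (m+1-i) * Scircle t p qR i
      = (∑ j ∈ Finset.Icc 1 m, Scircle t p qL j * Scircle t p qR (m+1-j))
        - Scircle t p qL m * Real.exp (-p*t) := by
    rw [hWswap, insert_Icc1 m (by omega), Finset.sum_insert (by simp), show m+1-1 = m from rfl,
      Scircle_one]
    ring
  rw [hWsplit, hWsplit2]
  have hBm1 : Bsum p qL qR (m-1) t
      = Real.exp (p*t) * ∑ i ∈ Finset.Icc 1 (m-1), Scircle t p qL i * Scircle t p qR (m-i) := by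
    unfold Bsum
    congr 1
    apply Finset.sum_congr rfl
    intro i hi; simp only [Finset.mem_Icc] at hi
    rw [show m-1+1-i = m-i by omega]
  rw [hBm1]
  unfold Bsum
  have h1 : Real.exp (p*t) * Real.exp (-p*t) = 1 := by
    rw [← Real.exp_add]; norm_num
  linear_combination (- qL * Scircle t p qR m - qR * Scircle t p qL m) * h1

lemma Asum_zero (p q : ℝ) (m : ℕ) : Asum p q m 0 = m := by
  unfold Asum
  rw [Finset.sum_congr rfl (fun j hj => Scircle_zero p q j (Finset.mem_Icc.mp hj).1)]
  rw [Finset.sum_const, Nat.card_Icc]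
  simp

lemma Bsum_zero (p qL qR : ℝ) (m : ℕ) : Bsum p qL qR m 0 = m := by
  unfold Bsum
  rw [mul_zero, Real.exp_zero, one_mul]
  rw [Finset.sum_congr rfl (fun j hj => by
    have hj' := Finset.mem_Icc.mp hj
    rw [Scircle_zero p qL j hj'.1, Scircle_zero p qR (m+1-j) (by omega), one_mul])]
  rw [Finset.sum_const, Nat.card_Icc]
  simp

lemma D1_eq (p qL qR t : ℝ) : Asum p (qL+qR) 1 t = Bsum p qL qR 1 t := by
  unfold Asum Bsum
  rw [Finset.Icc_self, Finset.sum_singleton, Finset.sum_singleton,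
    show 1+1-1 = 1 from rfl, Scircle_one, Scircle_one, Scircle_one,
    ← Real.exp_add, ← Real.exp_add]
  congr 1
  ring

lemma D_lemma (p qL qR : ℝ) (hp : 0 < p) (hqL : 0 < qL) (hqR : 0 < qR) (M : ℕ)
    (hnd : ∀ j : ℕ, 1 ≤ j → j ≤ M - 1 →
      qL ≠ (j : ℝ) * p ∧ qR ≠ (j : ℝ) * p ∧ qL + qR ≠ (j : ℝ) * p) :
    ∀ m, 1 ≤ m → m ≤ M → ∀ t, 0 < t →
      (0 ≤ Asum p (qL+qR) m t - Bsum p qL qR m t) ∧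
      (2 ≤ m → 0 < Asum p (qL+qR) m t - Bsum p qL qR m t) := by
  have hndL : ∀ j : ℕ, 1 ≤ j → j ≤ M - 1 → qL ≠ (j:ℝ)*p := fun j h1 h2 => (hnd j h1 h2).1
  have hndR : ∀ j : ℕ, 1 ≤ j → j ≤ M - 1 → qR ≠ (j:ℝ)*p := fun j h1 h2 => (hnd j h1 h2).2.1
  have hndQ : ∀ j : ℕ, 1 ≤ j → j ≤ M - 1 → qL + qR ≠ (j:ℝ)*p := fun j h1 h2 => (hnd j h1 h2).2.2
  intro m hm1
  induction m, hm1 using Nat.le_induction with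
  | base =>
    intro hM t ht
    rw [D1_eq]
    exact ⟨by linarith, fun h => absurd h (by omega)⟩
  | succ m hm ih =>
    intro hM t ht
    have hq : 0 < qL + qR := by linarith
    have key : ∀ s, 0 < s → 0 < Asum p (qL+qR) (m+1) s - Bsum p qL qR (m+1) s := by
      apply key_pos (c := p + (qL+qR))
        (g := fun s => (-(p+(qL+qR)) * Asum p (qL+qR) (m+1) s
            + (qL+qR) * Real.exp (-p*s) * (1 + Asum p (qL+qR) m s))
          - (-(p+(qL+qR)) * Bsum p qL qR (m+1) s
            + (qL+qR) * Real.exp (-p*s) * Bsum p qL qR m s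
            + qL * Scircle s p qR (m+1) + qR * Scircle s p qL (m+1)))
      · rw [Asum_zero, Bsum_zero]; ring
      · intro s
        have hA := Asum_hasDeriv p (qL+qR) hp M hndQ (m+1) (by omega) hM s
        have hB := Bsum_hasDeriv p qL qR hp M hndL hndR (m+1) (by omega) hM s
        rw [show m+1-1 = m from rfl] at hA hB
        exact hA.sub hB
      · intro s hs
        have he : (0:ℝ) < Real.exp (-p*s) := Real.exp_pos _
        have hD := (ih (by omega) s hs).1
        have hV := S_lt_exp p qR hp hqR M hndR (m+1) (by omega) hM s hs
        have hU := S_lt_exp p qL hp hqL M hndL (m+1) (by omega) hM s hs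

        nlinarith [mul_nonneg (mul_nonneg hq.le he.le) hD,
          mul_pos hqL (sub_pos.mpr hV), mul_pos hqR (sub_pos.mpr hU)]
    exact ⟨(key t ht).le, fun _ => key t ht⟩


/-- One-sided diffusion on a bounded line is strictly slower than two-sided
(possibly anisotropic) diffusion: for `p > 0`, `q^L, q^R > 0`,
`q := q^L + q^R`, `M ≥ 2`, under the nondegeneracy conditions, for every
`t > 0`,
`Σ_{j=1}^{M} S_circle(t;p,q,j) >
  e^{pt} · Σ_{j=1}^{M} S_circle(t;p,q^L,j) · S_circle(t;p,q^R,M+1−j)`;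
equivalently `f_line^{1-sided} < f_line^{2-sided}`. -/
theorem line_one_sided_slower_than_two_sided
    (p qL qR : ℝ) (hp : 0 < p) (hqL : 0 < qL) (hqR : 0 < qR)
    (M : ℕ) (hM : 2 ≤ M)
    (hnd : ∀ j : ℕ, 1 ≤ j → j ≤ M - 1 →
      qL ≠ (j : ℝ) * p ∧ qR ≠ (j : ℝ) * p ∧ qL + qR ≠ (j : ℝ) * p)
    (t : ℝ) (ht : 0 < t) :
    ∑ j ∈ Finset.Icc 1 M, Scircle t p (qL + qR) j >
      Real.exp (p * t) *
        ∑ j ∈ Finset.Icc 1 M, Scircle t p qL j * Scircle t p qR (M + 1 - j) := by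
  have h := (D_lemma p qL qR hp hqL hqR M hnd M (by omega) le_rfl t ht).2 hM
  unfold Asum Bsum at h
  linarith
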